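/- For fixed positive reals m, k, τ, γ and λ > 0, the function f(λ) = 1/(1 + (γτλ + k)/(γλ(γτλ + k) + k²mλ)) is strictly monotonically increasing in λ on (0, ∞). -/
import Mathlib

theorem dapi_per_mode_loss_strictMono_in_lambda
    (m k τ γ : ℝ) (hm : 0 < m) (hk : 0 < k) (hτ : 0 < τ) (hγ : 0 < γ) :
    StrictMonoOn (fun lam : ℝ => 1 / (1 + (γ * τ * lam + k) /
        (γ * lam * (γ * τ * lam + k) + k ^ 2 * m * lam))) (Set.Ioi 0) := by
  intro x hx y hy hxy
  simp only [Set.mem_Ioi] at hx hy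
  have Dx : 0 < γ * x * (γ * τ * x + k) + k ^ 2 * m * x := by positivity
  have Dy : 0 < γ * y * (γ * τ * y + k) + k ^ 2 * m * y := by positivity
  have hgy : 0 < (γ * τ * y + k) / (γ * y * (γ * τ * y + k) + k ^ 2 * m * y) := by positivity
  have hgt : (γ * τ * y + k) / (γ * y * (γ * τ * y + k) + k ^ 2 * m * y)
      < (γ * τ * x + k) / (γ * x * (γ * τ * x + k) + k ^ 2 * m * x) := by
    rw [div_lt_div_iff₀ Dy Dx]
    nlinarith [mul_pos (mul_pos (mul_pos (mul_pos hγ hτ) (mul_pos hγ hγ)) (mul_pos hx hy)) (sub_pos.mpr hxy),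
      mul_pos (mul_pos hk (mul_pos (mul_pos hγ hγ) hτ)) (mul_pos (sub_pos.mpr hxy) (by linarith : (0:ℝ) < y + x)),
      mul_pos (mul_pos hk (by positivity : (0:ℝ) < γ * k + k ^ 2 * m)) (sub_pos.mpr hxy),
      mul_pos (mul_pos (mul_pos hγ hτ) (mul_pos hγ (mul_pos hx hy))) (sub_pos.mpr hxy)]
  have h1 : 0 < 1 + (γ * τ * y + k) / (γ * y * (γ * τ * y + k) + k ^ 2 * m * y) := by linarith
  exact one_div_lt_one_div_of_lt h1 (by linarith)
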